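/- Every continuous piecewise linear positively homogeneous function f : ℝ^n → ℝ can be written as a difference g − h of two convex piecewise linear positively homogeneous functions. -/

import Mathlib

/-- `f` is positively homogeneous: `f (t • x) = t * f x` for `t ≥ 0`. -/
def PosHomog {n : ℕ} (f : (Fin n → ℝ) → ℝ) : Prop :=
  ∀ t : ℝ, 0 ≤ t → ∀ x, f (t • x) = t * f x

/-- `f` is piecewise linear: finitely many closed convex cones cover `ℝ^n`,
and on each of them `f` coincides with a linear function. -/
def PiecewiseLin {n : ℕ} (f : (Fin n → ℝ) → ℝ) : Prop :=
  ∃ (k : ℕ) (C : Fin k → Set (Fin n → ℝ)) (l : Fin k → ((Fin n → ℝ) →ₗ[ℝ] ℝ)),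
    (∀ i, IsClosed (C i) ∧ Convex ℝ (C i) ∧ ∀ t : ℝ, 0 ≤ t → ∀ x ∈ C i, t • x ∈ C i) ∧
    (⋃ i, C i) = Set.univ ∧
    ∀ i, ∀ x ∈ C i, f x = l i x

set_option maxHeartbeats 1000000

open Set Filter

/-- the convexifying term: sum over all ordered pairs of |l p x - l q x| -/
noncomputable def hfun {n k : ℕ} (l : Fin k → ((Fin n → ℝ) →ₗ[ℝ] ℝ)) (x : Fin n → ℝ) : ℝ :=
  ∑ pr : Fin k × Fin k, |l pr.1 x - l pr.2 x|

/-- key support lemma: at every point x₀ (lying in piece j), the convex candidate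
`f + hfun l` has a global linear minorant touching it at x₀. -/
lemma support_key {n k : ℕ} (f : (Fin n → ℝ) → ℝ) (Q : Fin k → Set (Fin n → ℝ))
    (l : Fin k → ((Fin n → ℝ) →ₗ[ℝ] ℝ))
    (hQc : ∀ i, IsClosed (Q i)) (hQv : ∀ i, Convex ℝ (Q i))
    (hcov : ∀ x, ∃ i, x ∈ Q i)
    (hf : ∀ i, ∀ x ∈ Q i, f x = l i x)
    (x₀ : Fin n → ℝ) (j : Fin k) (hj : x₀ ∈ Q j) :
    ∃ M : (Fin n → ℝ) →ₗ[ℝ] ℝ,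
      M x₀ = f x₀ + hfun l x₀ ∧ ∀ y, M y ≤ f y + hfun l y := by
  classical
  set ε : Fin k × Fin k → ℝ := fun pr => if 0 < l pr.1 x₀ - l pr.2 x₀ then 1 else -1 with hε
  set M : (Fin n → ℝ) →ₗ[ℝ] ℝ :=
    l j + ∑ pr : Fin k × Fin k, ε pr • (l pr.1 - l pr.2) with hM
  have Mval : ∀ x, M x = l j x + ∑ pr : Fin k × Fin k, ε pr * (l pr.1 x - l pr.2 x) := by
    intro x
    simp [hM, LinearMap.sum_apply, LinearMap.smul_apply, LinearMap.sub_apply, smul_eq_mul]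
  set slack : Fin k × Fin k → (Fin n → ℝ) → ℝ :=
    fun pr x => |l pr.1 x - l pr.2 x| - ε pr * (l pr.1 x - l pr.2 x) with hslack
  have slack_nonneg : ∀ pr x, 0 ≤ slack pr x := by
    intro pr x
    simp only [hslack, hε]
    by_cases hd : 0 < l pr.1 x₀ - l pr.2 x₀
    · rw [if_pos hd, one_mul]
      linarith [le_abs_self (l pr.1 x - l pr.2 x)]
    · rw [if_neg hd, neg_one_mul]
      linarith [neg_abs_le (l pr.1 x - l pr.2 x)]
  have key_rw : ∀ (c : Fin k) (x : Fin n → ℝ), x ∈ Q c →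
      (M x ≤ f x + hfun l x ↔
        l j x - l c x ≤ ∑ pr : Fin k × Fin k, slack pr x) := by
    intro c x hx
    rw [Mval, hf c x hx, hfun]
    simp only [hslack]
    rw [Finset.sum_sub_distrib]
    constructor <;> intro <;> linarith
  refine ⟨M, ?_, ?_⟩
  · rw [Mval, hf j x₀ hj, hfun]
    congr 1
    apply Finset.sum_congr rfl
    intro pr _
    simp only [hε]
    by_cases hd : 0 < l pr.1 x₀ - l pr.2 x₀
    · simp [hd, abs_of_pos hd]
    · simp [hd, abs_of_nonpos (not_lt.mp hd)]
  · intro y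
    set z : ℝ → (Fin n → ℝ) := fun t => x₀ + t • (y - x₀) with hz
    have hzc : Continuous z := by
      apply continuous_const.add
      exact continuous_id.smul continuous_const
    have z0 : z 0 = x₀ := by simp [hz]
    have z1 : z 1 = y := by simp [hz]
    have zval : ∀ (p : Fin k) (t : ℝ), l p (z t) = l p x₀ + t * (l p y - l p x₀) := by
      intro p t
      simp [hz, map_add, map_smul, map_sub, smul_eq_mul, mul_sub]
    -- membership in a convex set along the segment
    have zmem : ∀ (c : Fin k) (a b : ℝ), z a ∈ Q c → z b ∈ Q c →
        ∀ t ∈ Icc a b, z t ∈ Q c := by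
      intro c a b hza hzb t ht
      rcases eq_or_lt_of_le (ht.1.trans ht.2) with hab | hab
      · have : t = a := le_antisymm (hab ▸ ht.2) ht.1
        exact this ▸ hza
      · set s := (t - a) / (b - a) with hs
        have hs0 : 0 ≤ s := div_nonneg (by linarith [ht.1]) (by linarith)
        have hs1 : s ≤ 1 := by
          rw [hs, div_le_one (by linarith)]; linarith [ht.2]
        have h1 : s * (b - a) = t - a := by
          rw [hs]
          exact div_mul_cancel₀ _ (by linarith)
        have hts : t = (1 - s) * a + s * b := by linear_combination -h1
        have hcomb : z t = (1 - s) • z a + s • z b := by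
          funext i
          simp only [hz, Pi.add_apply, Pi.smul_apply, smul_eq_mul, Pi.sub_apply]
          rw [hts]
          ring
        rw [hcomb]
        exact hQv c hza hzb (by linarith) hs0 (by ring)
    -- the main induction along the segment
    have key : ∀ (N : ℕ) (S : Finset (Fin k)) (c : Fin k) (a : ℝ),
        S.card ≤ N → c ∈ S → a ∈ Icc (0:ℝ) 1 → z a ∈ Q c →
        (∀ t ∈ Ioc a 1, ∃ i ∈ S, z t ∈ Q i) →
        ∀ P : Finset (Fin k × Fin k),
          (∀ pr ∈ P, pr.2 ∉ S ∨ pr.2 = c) →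
          (∀ t ∈ Icc a 1, l j (z t) - l c (z t) ≤ ∑ pr ∈ P, slack pr (z t)) →
          ∀ t ∈ Icc a 1, M (z t) ≤ f (z t) + hfun l (z t) := by
      intro N
      induction N with
      | zero =>
        intro S c a hcard hcS
        exact absurd (Finset.card_eq_zero.mp (Nat.le_zero.mp hcard) ▸ hcS)
          (Finset.notMem_empty c)
      | succ N ih =>
        intro S c a hcard hcS ha hzac hcovS P hP hH t ht
        -- the last time the segment stays in piece c
        set A : Set ℝ := Icc a 1 ∩ z ⁻¹' (Q c) with hA
        have hAne : A.Nonempty := ⟨a, ⟨le_refl a, ha.2⟩, hzac⟩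
        have hAcl : IsClosed A := (isClosed_Icc).inter ((hQc c).preimage hzc)
        have hAbd : BddAbove A := ⟨1, fun u hu => hu.1.2⟩
        set τ : ℝ := sSup A with hτ
        have hτA : τ ∈ A := hAcl.csSup_mem hAne hAbd
        have hτle : ∀ u ∈ A, u ≤ τ := fun u hu => le_csSup hAbd hu
        have haτ : a ≤ τ := hτle a ⟨⟨le_refl a, ha.2⟩, hzac⟩
        have hτ1 : τ ≤ 1 := hτA.1.2
        have hzτ : z τ ∈ Q c := hτA.2
        by_cases htτ : t ≤ τ
        · -- t is still in piece c
          have hzt : z t ∈ Q c := zmem c a τ hzac hzτ t ⟨ht.1, htτ⟩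
          rw [key_rw c (z t) hzt]
          refine le_trans (hH t ht) ?_
          exact Finset.sum_le_sum_of_subset_of_nonneg (Finset.subset_univ P)
            (fun pr _ _ => slack_nonneg pr (z t))
        · push_neg at htτ
          have hτlt1 : τ < 1 := lt_of_lt_of_le htτ ht.2
          -- find the next piece c'
          have hev : ∀ᶠ u in nhdsWithin τ (Ioi τ), ∃ i ∈ S.erase c, z u ∈ Q i := by
            filter_upwards [Ioc_mem_nhdsGT_of_mem (⟨le_refl τ, hτlt1⟩ : τ ∈ Ico τ 1)]
            intro u hu
            obtain ⟨i, hiS, hzi⟩ := hcovS u ⟨lt_of_le_of_lt haτ hu.1, hu.2⟩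
            refine ⟨i, Finset.mem_erase.mpr ⟨?_, hiS⟩, hzi⟩
            rintro rfl
            exact absurd (hτle u ⟨⟨haτ.trans hu.1.le, hu.2⟩, hzi⟩) (not_le.mpr hu.1)
          have hfr : ∃ i ∈ S.erase c, ∃ᶠ u in nhdsWithin τ (Ioi τ), z u ∈ Q i := by
            by_contra hcon
            push_neg at hcon
            have hall : ∀ᶠ u in nhdsWithin τ (Ioi τ), ∀ i ∈ S.erase c, z u ∉ Q i :=
              (Filter.eventually_all_finset _).mpr (fun i hi => (hcon i hi))
            obtain ⟨u, hu1, hu2⟩ := (hall.and hev).exists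
            obtain ⟨i, hi, hzi⟩ := hu2
            exact hu1 i hi hzi
          obtain ⟨c', hc'S, hc'fr⟩ := hfr
          have hzτc' : z τ ∈ Q c' := by
            have := mem_closure_of_frequently_of_tendsto hc'fr
              ((hzc.continuousAt).tendsto.mono_left nhdsWithin_le_nhds)
            rwa [(hQc c').closure_eq] at this
          have hcc' : c' ≠ c := (Finset.mem_erase.mp hc'S).1
          -- l c (z τ) = l c' (z τ)
          have hdτ : l c (z τ) - l c' (z τ) = 0 := by
            rw [← hf c (z τ) hzτ, ← hf c' (z τ) hzτc', sub_self]
          -- step bound for the pair (c, c')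
          have hstep : ∀ u ∈ Icc τ 1, l c (z u) - l c' (z u) ≤ slack (c, c') (z u) := by
            intro u hu
            simp only [hslack, hε]
            by_cases hd : 0 < l (c, c').1 x₀ - l (c, c').2 x₀
            · simp only [if_pos hd]
              have hτpos : 0 < τ := by
                rcases lt_or_eq_of_le (le_trans ha.1 haτ) with h | h
                · exact h
                · exfalso
                  have : z τ = x₀ := by rw [← h, z0]
                  rw [this] at hdτ
                  simp only at hd
                  linarith
              -- affine function vanishing at τ, positive at 0, so nonpositive for u ≥ τ
              have e0 : l c (z u) - l c' (z u) =
                  (l c x₀ - l c' x₀) + u * ((l c y - l c' y) - (l c x₀ - l c' x₀)) := by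
                rw [zval, zval]; ring
              have eτ : (l c x₀ - l c' x₀) + τ * ((l c y - l c' y) - (l c x₀ - l c' x₀)) = 0 := by
                rw [zval, zval] at hdτ; linarith
              have hd' : 0 < l c x₀ - l c' x₀ := hd
              set s0 := (l c y - l c' y) - (l c x₀ - l c' x₀) with hs0
              have hsneg : s0 < 0 := by nlinarith
              have hun : l c (z u) - l c' (z u) ≤ 0 := by
                rw [e0]
                nlinarith [hu.1, mul_le_mul_of_nonpos_right hu.1 (le_of_lt hsneg)]
              have := abs_nonneg (l c (z u) - l c' (z u))
              rw [abs_of_nonpos hun]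
              linarith
            · simp only [if_neg hd]
              have := abs_nonneg (l c (z u) - l c' (z u))
              have h2 := neg_abs_le (l c (z u) - l c' (z u))
              linarith
          -- pair (c,c') is not yet in P
          have hnm : (c, c') ∉ P := by
            intro hmem
            rcases hP _ hmem with h | h
            · exact h (Finset.mem_of_mem_erase hc'S)
            · exact hcc' h
          -- recurse
          refine ih (S.erase c) c' τ ?_ hc'S ⟨le_trans ha.1 haτ, hτ1⟩ hzτc' ?_
            (insert (c, c') P) ?_ ?_ t ⟨le_of_lt htτ, ht.2⟩
          · have := Finset.card_erase_of_mem hcS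
            omega
          · intro u hu
            obtain ⟨i, hiS, hzi⟩ := hcovS u ⟨lt_of_le_of_lt haτ hu.1, hu.2⟩
            refine ⟨i, Finset.mem_erase.mpr ⟨?_, hiS⟩, hzi⟩
            rintro rfl
            exact absurd (hτle u ⟨⟨haτ.trans hu.1.le, hu.2⟩, hzi⟩) (not_le.mpr hu.1)
          · intro pr hpr
            rcases Finset.mem_insert.mp hpr with h | h
            · right; rw [h]
            · rcases hP pr h with h' | h'
              · left; intro hmem; exact h' (Finset.mem_of_mem_erase hmem)
              · left; rw [h']; intro hmem; exact (Finset.mem_erase.mp hmem).1 rfl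
          · intro u hu
            rw [Finset.sum_insert hnm]
            have h1 := hH u ⟨le_trans haτ hu.1, hu.2⟩
            have h2 := hstep u hu
            linarith
    -- apply the induction with S = univ, c = j, a = 0, P = ∅
    obtain ⟨c₀, hc₀⟩ := hcov x₀
    have := key (Finset.univ.card) Finset.univ j 0 (le_refl _) (Finset.mem_univ j)
      (by constructor <;> norm_num) (z0 ▸ hj)
      (fun t _ => by obtain ⟨i, hi⟩ := hcov (z t); exact ⟨i, Finset.mem_univ i, hi⟩)
      ∅ (fun pr hpr => absurd hpr (Finset.notMem_empty pr))
      (fun t _ => by simp) 1 (by constructor <;> norm_num)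
    rwa [z1] at this

lemma hfun_convex {n k : ℕ} (l : Fin k → ((Fin n → ℝ) →ₗ[ℝ] ℝ)) :
    ConvexOn ℝ Set.univ (hfun l) := by
  refine ⟨convex_univ, ?_⟩
  intro x _ y _ a b ha hb hab
  simp only [hfun, smul_eq_mul]
  rw [Finset.mul_sum, Finset.mul_sum, ← Finset.sum_add_distrib]
  apply Finset.sum_le_sum
  intro pr _
  have e1 : l pr.1 (a • x + b • y) - l pr.2 (a • x + b • y)
      = a * (l pr.1 x - l pr.2 x) + b * (l pr.1 y - l pr.2 y) := by
    simp only [map_add, map_smul, smul_eq_mul]; ring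
  rw [e1]
  calc |a * (l pr.1 x - l pr.2 x) + b * (l pr.1 y - l pr.2 y)|
      ≤ |a * (l pr.1 x - l pr.2 x)| + |b * (l pr.1 y - l pr.2 y)| := abs_add_le _ _
    _ = a * |l pr.1 x - l pr.2 x| + b * |l pr.1 y - l pr.2 y| := by
        rw [abs_mul, abs_mul, abs_of_nonneg ha, abs_of_nonneg hb]

lemma hfun_homog {n k : ℕ} (l : Fin k → ((Fin n → ℝ) →ₗ[ℝ] ℝ)) :
    ∀ t : ℝ, 0 ≤ t → ∀ x, hfun l (t • x) = t * hfun l x := by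
  intro t ht x
  simp only [hfun, map_smul, smul_eq_mul, Finset.mul_sum]
  apply Finset.sum_congr rfl
  intro pr _
  rw [← mul_sub, abs_mul, abs_of_nonneg ht]

/-- Both `f + hfun l` and `hfun l` are piecewise linear w.r.t. the sign-refined pieces. -/
lemma pl_construction {n k : ℕ} (f : (Fin n → ℝ) → ℝ) (Q : Fin k → Set (Fin n → ℝ))
    (l : Fin k → ((Fin n → ℝ) →ₗ[ℝ] ℝ))
    (hQ : ∀ i, IsClosed (Q i) ∧ Convex ℝ (Q i) ∧ ∀ t : ℝ, 0 ≤ t → ∀ x ∈ Q i, t • x ∈ Q i)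
    (hcover : (⋃ i, Q i) = Set.univ)
    (hf : ∀ i, ∀ x ∈ Q i, f x = l i x) :
    PiecewiseLin (fun x => f x + hfun l x) ∧ PiecewiseLin (hfun l) := by
  classical
  set ι := Fin k × (Fin k × Fin k → Bool) with hι
  set K := Fintype.card ι with hK
  set e : Fin K ≃ ι := (Fintype.equivFin ι).symm with he
  set C : Fin K → Set (Fin n → ℝ) := fun r =>
    Q (e r).1 ∩ ⋂ pr : Fin k × Fin k,
      {x | if (e r).2 pr then 0 ≤ l pr.1 x - l pr.2 x else l pr.1 x - l pr.2 x ≤ 0} with hC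
  have lcont : ∀ p : Fin k, Continuous fun x => l p x :=
    fun p => (l p).continuous_of_finiteDimensional
  have hCprop : ∀ r, IsClosed (C r) ∧ Convex ℝ (C r) ∧
      ∀ t : ℝ, 0 ≤ t → ∀ x ∈ C r, t • x ∈ C r := by
    intro r
    refine ⟨?_, ?_, ?_⟩
    · apply ((hQ (e r).1).1).inter
      apply isClosed_iInter
      intro pr
      by_cases hb : (e r).2 pr
      · simp only [if_pos hb]
        exact isClosed_le continuous_const ((lcont pr.1).sub (lcont pr.2))
      · simp only [if_neg hb]
        exact isClosed_le ((lcont pr.1).sub (lcont pr.2)) continuous_const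
    · apply ((hQ (e r).1).2.1).inter
      apply convex_iInter
      intro pr
      by_cases hb : (e r).2 pr
      · intro x hx y hy a b ha hb' hab
        simp only [Set.mem_setOf_eq, if_pos hb] at hx hy
        simp only [Set.mem_setOf_eq, if_pos hb, map_add, map_smul, smul_eq_mul]
        nlinarith
      · intro x hx y hy a b ha hb' hab
        simp only [Set.mem_setOf_eq, if_neg hb] at hx hy
        simp only [Set.mem_setOf_eq, if_neg hb, map_add, map_smul, smul_eq_mul]
        nlinarith
    · intro t ht x hx
      refine ⟨(hQ (e r).1).2.2 t ht x hx.1, ?_⟩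
      have hx2 := hx.2
      simp only [Set.mem_iInter, Set.mem_setOf_eq] at hx2 ⊢
      intro pr
      have := hx2 pr
      by_cases hb : (e r).2 pr
      · simp only [if_pos hb] at this ⊢
        simp only [map_smul, smul_eq_mul]
        rw [← mul_sub]
        exact mul_nonneg ht this
      · simp only [if_neg hb] at this ⊢
        simp only [map_smul, smul_eq_mul]
        rw [← mul_sub]
        exact mul_nonpos_of_nonneg_of_nonpos ht this
  have hCcover : (⋃ r, C r) = Set.univ := by
    apply Set.eq_univ_of_forall
    intro x
    have : x ∈ ⋃ i, Q i := hcover ▸ Set.mem_univ x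
    obtain ⟨i, hi⟩ := Set.mem_iUnion.mp this
    set σ : Fin k × Fin k → Bool := fun pr => decide (0 ≤ l pr.1 x - l pr.2 x) with hσ
    apply Set.mem_iUnion.mpr
    refine ⟨e.symm (i, σ), ?_⟩
    have her : e (e.symm (i, σ)) = (i, σ) := e.apply_symm_apply _
    rw [hC]
    simp only [her]
    refine ⟨hi, ?_⟩
    simp only [Set.mem_iInter, Set.mem_setOf_eq]
    intro pr
    by_cases hb : 0 ≤ l pr.1 x - l pr.2 x
    · rw [if_pos (show σ pr = true by simp [hσ]; linarith)]
      exact hb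
    · rw [if_neg (show ¬ σ pr = true by simp [hσ]; linarith [not_le.mp hb])]
      linarith [not_le.mp hb]
  -- value of hfun on C r
  have habs : ∀ r, ∀ x ∈ C r, ∀ pr : Fin k × Fin k,
      |l pr.1 x - l pr.2 x| = (if (e r).2 pr then (1:ℝ) else -1) * (l pr.1 x - l pr.2 x) := by
    intro r x hx pr
    have hx2 := hx.2
    simp only [Set.mem_iInter, Set.mem_setOf_eq] at hx2
    have := hx2 pr
    by_cases hb : (e r).2 pr
    · simp only [if_pos hb] at this ⊢
      rw [abs_of_nonneg this, one_mul]
    · simp only [if_neg hb] at this ⊢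
      rw [abs_of_nonpos this, neg_one_mul]
  constructor
  · refine ⟨K, C, fun r => l (e r).1 + ∑ pr : Fin k × Fin k,
      (if (e r).2 pr then (1:ℝ) else -1) • (l pr.1 - l pr.2), hCprop, hCcover, ?_⟩
    intro r x hx
    have hfx : f x = l (e r).1 x := hf (e r).1 x hx.1
    simp only [LinearMap.add_apply, LinearMap.sum_apply, LinearMap.smul_apply,
      LinearMap.sub_apply, smul_eq_mul, hfun]
    rw [hfx]
    congr 1
    apply Finset.sum_congr rfl
    intro pr _
    exact habs r x hx pr
  · refine ⟨K, C, fun r => ∑ pr : Fin k × Fin k,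
      (if (e r).2 pr then (1:ℝ) else -1) • (l pr.1 - l pr.2), hCprop, hCcover, ?_⟩
    intro r x hx
    simp only [LinearMap.sum_apply, LinearMap.smul_apply, LinearMap.sub_apply,
      smul_eq_mul, hfun]
    apply Finset.sum_congr rfl
    intro pr _
    exact habs r x hx pr

theorem stmt_3 {n : ℕ} (f : (Fin n → ℝ) → ℝ)
    (hc : Continuous f) (hh : PosHomog f) (hpl : PiecewiseLin f) :
    ∃ g h : (Fin n → ℝ) → ℝ,
      ConvexOn ℝ Set.univ g ∧ ConvexOn ℝ Set.univ h ∧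
      PosHomog g ∧ PosHomog h ∧ PiecewiseLin g ∧ PiecewiseLin h ∧
      f = g - h := by
  classical
  obtain ⟨k, Q, l, hQ, hcover, hf⟩ := hpl
  have hcov' : ∀ x, ∃ i, x ∈ Q i := fun x =>
    Set.mem_iUnion.mp (hcover ▸ Set.mem_univ x)
  obtain ⟨hPLg, hPLh⟩ := pl_construction f Q l hQ hcover hf
  refine ⟨fun x => f x + hfun l x, hfun l, ?_, hfun_convex l, ?_, hfun_homog l,
    hPLg, hPLh, ?_⟩
  · refine ⟨convex_univ, ?_⟩
    intro x _ y _ a b ha hb hab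
    obtain ⟨j, hj⟩ := hcov' (a • x + b • y)
    obtain ⟨M, hMA, hMB⟩ := support_key f Q l (fun i => (hQ i).1)
      (fun i => (hQ i).2.1) hcov' hf (a • x + b • y) j hj
    simp only [smul_eq_mul]
    have hMsum : M (a • x + b • y) = a * M x + b * M y := by
      rw [map_add, map_smul, map_smul, smul_eq_mul, smul_eq_mul]
    have h1 := mul_le_mul_of_nonneg_left (hMB x) ha
    have h2 := mul_le_mul_of_nonneg_left (hMB y) hb
    linarith [hMA.symm.le, hMA.ge, hMsum.le, hMsum.ge]
  · intro t ht x
    show f (t • x) + hfun l (t • x) = t * (f x + hfun l x)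
    rw [hh t ht x, hfun_homog l t ht x]
    ring
  · funext x
    simp
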